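/- In the two-node case (J = 2) with node 1 the bottleneck, for any point x on the hyperplane τ_1x_1 + τ_2x_2 = w with x ≠ x†(w) and x_1 < x†_1(w), one has R_1(x) ≤ R_1(x†(w)) and R_2(x) ≥ R_2(x†(w)), with at least one inequality strict; consequently (x - x†(w))^T(γ - μR(x)) < 0. -/

import Mathlib

/-- Two-node case: monotonicity of the allocation off the invariant point.
`R_i(x) = min(x_i, K_i) / (min(x_1, K_1) + min(x_2, K_2))`; `x†(w)` is the invariant
point on the hyperplane `τ_1 x_1 + τ_2 x_2 = w`, satisfying `μ_i R_i(x†) = γ_i`.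
If `x ≠ x†(w)` lies on the same hyperplane with `x_1 < x†_1(w)`, then
`R_1(x) ≤ R_1(x†)`, `R_2(x) ≥ R_2(x†)`, at least one strictly, and
`(x - x†)ᵀ(γ - μ R(x)) < 0`. -/
theorem two_node_lyapunov_decrease
    (τ1 τ2 μ1 μ2 γ1 γ2 K1 K2 w : ℝ)
    (hτ1 : 0 < τ1) (hτ2 : 0 < τ2)
    (hμ1 : 0 < μ1) (hμ2 : 0 < μ2) (hγ1 : 0 < γ1) (hγ2 : 0 < γ2)
    (hK1 : 0 < K1) (hK2 : 0 < K2)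
    (hcrit : γ1 / μ1 + γ2 / μ2 = 1)
    (hbot : μ1 * K1 / γ1 < μ2 * K2 / γ2)
    (x1 x2 xd1 xd2 : ℝ)
    (hx1 : 0 ≤ x1) (hx2 : 0 ≤ x2) (hxd1 : 0 ≤ xd1) (hxd2 : 0 ≤ xd2)
    (hxs : 0 < min x1 K1 + min x2 K2) (hxds : 0 < min xd1 K1 + min xd2 K2)
    (hplane : τ1 * x1 + τ2 * x2 = w) (hplaned : τ1 * xd1 + τ2 * xd2 = w)
    (hinv : μ2 * xd2 / γ2 = μ1 * min xd1 K1 / γ1)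
    (hbal1 : μ1 * (min xd1 K1 / (min xd1 K1 + min xd2 K2)) = γ1)
    (hbal2 : μ2 * (min xd2 K2 / (min xd1 K1 + min xd2 K2)) = γ2)
    (hne : (x1, x2) ≠ (xd1, xd2))
    (hlt : x1 < xd1) :
    min x1 K1 / (min x1 K1 + min x2 K2)
        ≤ min xd1 K1 / (min xd1 K1 + min xd2 K2) ∧
    min x2 K2 / (min x1 K1 + min x2 K2)
        ≥ min xd2 K2 / (min xd1 K1 + min xd2 K2) ∧
    (min x1 K1 / (min x1 K1 + min x2 K2)
        < min xd1 K1 / (min xd1 K1 + min xd2 K2) ∨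
     min x2 K2 / (min x1 K1 + min x2 K2)
        > min xd2 K2 / (min xd1 K1 + min xd2 K2)) ∧
    (x1 - xd1) * (γ1 - μ1 * (min x1 K1 / (min x1 K1 + min x2 K2)))
      + (x2 - xd2) * (γ2 - μ2 * (min x2 K2 / (min x1 K1 + min x2 K2))) < 0 := by
  set a := min x1 K1 with ha
  set b := min x2 K2 with hb
  set ad := min xd1 K1 with had
  set bd := min xd2 K2 with hbd
  have hann : 0 ≤ a := le_min hx1 hK1.le
  have hbnn : 0 ≤ b := le_min hx2 hK2.le
  have hadnn : 0 ≤ ad := le_min hxd1 hK1.le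
  have hbdnn : 0 ≤ bd := le_min hxd2 hK2.le
  -- ad > 0
  have hadpos : 0 < ad := by
    rcases hadnn.lt_or_eq with h | h
    · exact h
    · exfalso
      rw [← h] at hbal1
      simp at hbal1
      linarith
  have hadK1 : ad ≤ K1 := min_le_right _ _
  -- xd2 < K2
  have hxd2K : xd2 < K2 := by
    rw [div_eq_div_iff hγ2.ne' hγ1.ne'] at hinv
    rw [div_lt_div_iff₀ hγ1 hγ2] at hbot
    nlinarith [mul_pos hμ2 hγ1, mul_pos hμ1 hγ2]
  have hbdval : bd = xd2 := min_eq_left hxd2K.le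
  -- x2 > xd2
  have hx2gt : xd2 < x2 := by
    nlinarith [mul_pos hτ1 (sub_pos.mpr hlt)]
  -- bd < b
  have hbgt : bd < b := by
    rw [hbdval]; exact lt_min hx2gt hxd2K
  -- a ≤ ad
  have hale : a ≤ ad := min_le_min hlt.le le_rfl
  -- strict monotonicity of R1
  have hR1 : a / (a + b) < ad / (ad + bd) := by
    rw [div_lt_div_iff₀ hxs hxds]
    nlinarith [mul_le_mul_of_nonneg_right hale hbdnn,
      mul_lt_mul_of_pos_left hbgt hadpos]
  have hsum : a / (a + b) + b / (a + b) = 1 := by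
    rw [← add_div, div_self hxs.ne']
  have hsumd : ad / (ad + bd) + bd / (ad + bd) = 1 := by
    rw [← add_div, div_self hxds.ne']
  have hR2 : b / (a + b) > bd / (ad + bd) := by linarith
  refine ⟨hR1.le, hR2.le, Or.inl hR1, ?_⟩
  rw [← hbal1, ← hbal2]
  have t1 : 0 < μ1 * (ad / (ad + bd) - a / (a + b)) * (xd1 - x1) :=
    mul_pos (mul_pos hμ1 (sub_pos.mpr hR1)) (sub_pos.mpr hlt)
  have t2 : 0 < μ2 * (b / (a + b) - bd / (ad + bd)) * (x2 - xd2) :=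
    mul_pos (mul_pos hμ2 (sub_pos.mpr hR2)) (sub_pos.mpr hx2gt)
  linarith [t1, t2]
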